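/- In the C_n setting with blocks of sizes m+1 and p+1 with m + 1 = 3(p + 1), the vectors ᾱ = u − v and β̄ = 2v form a G_2 simple-root configuration (length ratio squared 3, angle 150°), but the vector 3u − v (which would be the root β̄ + 3ᾱ of G_2) is not of the form p(γ) for any root γ = ±2e_i or ±e_i ± e_j of C_n, where p is the projection orthogonal to the two blocks' simple roots. Hence no root system of type G_2 arises this way. -/

import Mathlib

open scoped RealInnerProductSpace

/-- In the C_n setting with blocks of sizes m+1 = 3(p+1) and p+1, the vectors ᾱ = u − v
and β̄ = 2v form a G₂ simple-root configuration (squared length ratio 3, angle 150°), but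
the vector 3u − v (which would be the G₂ root β̄ + 3ᾱ) is not the projection of any root
±2e_i or ±e_i ± e_j of C_n; hence no root system of type G₂ arises this way. -/
theorem stmt9 {V : Type*} [NormedAddCommGroup V] [InnerProductSpace ℝ V]
    (n r m s p : ℕ) (hm : m + 1 = 3 * (p + 1))
    (hrn : r + m < n) (hsn : s + p < n) (e : ℕ → V)
    (hd : Disjoint (Finset.Icc r (r + m)) (Finset.Icc s (s + p)))
    (horth : ∀ i, i < n → ∀ j, j < n → ⟪e i, e j⟫ = if i = j then 1 else 0)
    (u v : V)
    (hu : u = ((m : ℝ) + 1)⁻¹ • ∑ i ∈ Finset.Icc r (r + m), e i)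
    (hv : v = ((p : ℝ) + 1)⁻¹ • ∑ i ∈ Finset.Icc s (s + p), e i)
    (α' β' : V) (hα' : α' = u - v) (hβ' : β' = (2 : ℝ) • v)
    (f : ℕ → V)
    (hf : ∀ i, f i = if i ∈ Finset.Icc r (r + m) then u
      else if i ∈ Finset.Icc s (s + p) then v else e i)
    (P : Set V)
    (hP : P = {x | (∃ i j, i < n ∧ j < n ∧ i ≠ j ∧
        (x = f i + f j ∨ x = f i - f j ∨ x = -f i - f j)) ∨
      (∃ i, i < n ∧ (x = (2 : ℝ) • f i ∨ x = -((2 : ℝ) • f i)))}) :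
    ‖β'‖ ^ 2 = 3 * ‖α'‖ ^ 2 ∧
    ⟪α', β'⟫ / (‖α'‖ * ‖β'‖) = -(Real.sqrt 3) / 2 ∧
    (3 : ℝ) • u - v ∉ P := by
  set A := Finset.Icc r (r + m) with hA
  set B := Finset.Icc s (s + p) with hB
  set c : ℝ := ((m : ℝ) + 1)⁻¹ with hc
  set d : ℝ := ((p : ℝ) + 1)⁻¹ with hd'
  have hmpos : (0:ℝ) < (m : ℝ) + 1 := by positivity
  have hppos : (0:ℝ) < (p : ℝ) + 1 := by positivity
  have hcpos : 0 < c := by positivity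
  have hdpos : 0 < d := by positivity
  have hm' : ((m : ℝ) + 1) = 3 * ((p : ℝ) + 1) := by exact_mod_cast hm
  have hcd : c = d / 3 := by rw [hc, hd', hm']; field_simp
  have hAn : ∀ i ∈ A, i < n := fun i hi =>
    lt_of_le_of_lt (Finset.mem_Icc.mp hi).2 hrn
  have hBn : ∀ i ∈ B, i < n := fun i hi =>
    lt_of_le_of_lt (Finset.mem_Icc.mp hi).2 hsn
  have hcardA : (A.card : ℝ) = (m : ℝ) + 1 := by
    rw [hA, Nat.card_Icc]
    have : r + m + 1 - r = m + 1 := by omega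
    rw [this]; push_cast; ring
  have hcardB : (B.card : ℝ) = (p : ℝ) + 1 := by
    rw [hB, Nat.card_Icc]
    have : s + p + 1 - s = p + 1 := by omega
    rw [this]; push_cast; ring
  have hEu : ∀ j, j < n → ⟪e j, u⟫ = if j ∈ A then c else 0 := by
    intro j hj
    rw [hu, real_inner_smul_right, inner_sum]
    have hsum : ∑ i ∈ A, ⟪e j, e i⟫ = if j ∈ A then (1:ℝ) else 0 := by
      rw [Finset.sum_congr rfl (fun i hi => horth j hj i (hAn i hi))]
      simp
    rw [hsum]
    split <;> simp
  have hEv : ∀ j, j < n → ⟪e j, v⟫ = if j ∈ B then d else 0 := by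
    intro j hj
    rw [hv, real_inner_smul_right, inner_sum]
    have hsum : ∑ i ∈ B, ⟪e j, e i⟫ = if j ∈ B then (1:ℝ) else 0 := by
      rw [Finset.sum_congr rfl (fun i hi => horth j hj i (hBn i hi))]
      simp
    rw [hsum]
    split <;> simp
  have huu : ⟪u, u⟫ = c := by
    nth_rewrite 1 [hu]
    rw [real_inner_smul_left, sum_inner]
    have : ∀ i ∈ A, ⟪e i, u⟫ = c := by
      intro i hi; rw [hEu i (hAn i hi), if_pos hi]
    rw [Finset.sum_congr rfl this, Finset.sum_const, nsmul_eq_mul, hcardA]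
    rw [hc]; field_simp
  have hvv : ⟪v, v⟫ = d := by
    nth_rewrite 1 [hv]
    rw [real_inner_smul_left, sum_inner]
    have : ∀ i ∈ B, ⟪e i, v⟫ = d := by
      intro i hi; rw [hEv i (hBn i hi), if_pos hi]
    rw [Finset.sum_congr rfl this, Finset.sum_const, nsmul_eq_mul, hcardB]
    rw [hd']; field_simp
  have huv : ⟪u, v⟫ = 0 := by
    rw [hu, real_inner_smul_left, sum_inner]
    have : ∀ i ∈ A, ⟪e i, v⟫ = 0 := by
      intro i hi
      rw [hEv i (hAn i hi), if_neg (Finset.disjoint_left.mp hd hi)]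
    rw [Finset.sum_congr rfl this]
    simp
  have hvu : ⟪v, u⟫ = 0 := by rw [real_inner_comm]; exact huv
  have na2 : ‖α'‖ ^ 2 = c + d := by
    rw [← real_inner_self_eq_norm_sq, hα']
    rw [inner_sub_left, inner_sub_right, inner_sub_right, huu, huv, hvu, hvv]; ring
  have nb2 : ‖β'‖ ^ 2 = 4 * d := by
    rw [← real_inner_self_eq_norm_sq, hβ']
    rw [real_inner_smul_left, real_inner_smul_right, hvv]
    ring
  have hip : ⟪α', β'⟫ = -2 * d := by
    rw [hα', hβ', inner_sub_left, real_inner_smul_right, real_inner_smul_right,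
      huv, hvv]
    ring
  have hs3 : Real.sqrt 3 ^ 2 = 3 := Real.sq_sqrt (by norm_num)
  have hs3pos : 0 < Real.sqrt 3 := Real.sqrt_pos.mpr (by norm_num)
  refine ⟨?_, ?_, ?_⟩
  · rw [na2, nb2, hcd]; ring
  · have habn : ‖α'‖ * ‖β'‖ = 4 * d / Real.sqrt 3 := by
      have h1 : (‖α'‖ * ‖β'‖) ^ 2 = (4 * d / Real.sqrt 3) ^ 2 := by
        rw [mul_pow, na2, nb2, div_pow, hs3, hcd]; ring
      have h2 : 0 ≤ ‖α'‖ * ‖β'‖ := by positivity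
      have h3 : 0 ≤ 4 * d / Real.sqrt 3 := by positivity
      calc ‖α'‖ * ‖β'‖ = Real.sqrt ((‖α'‖ * ‖β'‖) ^ 2) := (Real.sqrt_sq h2).symm
        _ = Real.sqrt ((4 * d / Real.sqrt 3) ^ 2) := by rw [h1]
        _ = 4 * d / Real.sqrt 3 := Real.sqrt_sq h3
    rw [hip, habn, div_div_eq_mul_div]
    rw [div_eq_div_iff (ne_of_gt (by positivity : (0:ℝ) < 4 * d)) (by norm_num : (2:ℝ) ≠ 0)]
    ring
  · have hfu : ∀ i, i < n → ⟪f i, u⟫ = 0 ∨ ⟪f i, u⟫ = c := by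
      intro i hi
      rw [hf i]
      split_ifs with h1 h2
      · right; exact huu
      · left; exact hvu
      · left; rw [hEu i hi, if_neg h1]
    have hx : ⟪(3 : ℝ) • u - v, u⟫ = 3 * c := by
      rw [inner_sub_left, real_inner_smul_left, huu, hvu]; ring
    intro hmem
    rw [hP] at hmem
    rcases hmem with ⟨i, j, hi, hj, hij, hcase⟩ | ⟨i, hi, hcase⟩
    · rcases hfu i hi with h1 | h1 <;> rcases hfu j hj with h2 | h2 <;>
        rcases hcase with heq | heq | heq <;> rw [heq] at hx <;>
        simp only [inner_add_left, inner_sub_left, inner_neg_left, h1, h2,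
          neg_zero, add_zero, zero_add, sub_zero, zero_sub, neg_neg, sub_self] at hx <;>
        linarith
    · rcases hfu i hi with h1 | h1 <;> rcases hcase with heq | heq <;>
        rw [heq] at hx <;>
        simp only [inner_neg_left, real_inner_smul_left, h1, mul_zero, neg_zero] at hx <;>
        linarith
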